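/- Let H, F : ℝⁿ × ℝⁿ → ℝ be C¹ and f : ℝⁿ → ℝ be C². Define X_H[f] : ℝⁿ → ℝ by X_H[f](x) = H(x, ∇f(x)), similarly X_F[f], and define the canonical Poisson bracket (H, F)(x, p) = ⟨∂H/∂p(x, p), ∂F/∂x(x, p)⟩ − ⟨∂H/∂x(x, p), ∂F/∂p(x, p)⟩. Then for every x ∈ ℝⁿ: ⟨∂F/∂p(x, ∇f(x)), ∇(X_H[f])(x)⟩ − ⟨∂H/∂p(x, ∇f(x)), ∇(X_F[f])(x)⟩ = −(H, F)(x, ∇f(x)). -/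

import Mathlib

open scoped RealInnerProductSpace

noncomputable section

abbrev E (n : ℕ) : Type := EuclideanSpace ℝ (Fin n)

open InnerProductSpace ContinuousLinearMap

section helpers

variable {n : ℕ}

lemma inner_gradient_eq (h : E n → ℝ) (y v : E n) :
    ⟪gradient h y, v⟫ = fderiv ℝ h y v := toDual_symm_apply

lemma fderiv_partial_fst (G : E n × E n → ℝ) (hG : ContDiff ℝ 1 G) (x p v : E n) :
    fderiv ℝ (fun x' => G (x', p)) x v = fderiv ℝ G (x, p) (v, 0) := by
  have h := (HasFDerivAt.comp x ((hG.differentiable one_ne_zero (x, p)).hasFDerivAt)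
    (hasFDerivAt_prodMk_left (𝕜 := ℝ) x p)).fderiv
  rw [show (fun x' => G (x', p)) = G ∘ (fun x' : E n => (x', p)) from rfl, h]
  rfl

lemma fderiv_partial_snd (G : E n × E n → ℝ) (hG : ContDiff ℝ 1 G) (x p w : E n) :
    fderiv ℝ (fun p' => G (x, p')) p w = fderiv ℝ G (x, p) (0, w) := by
  have h := (HasFDerivAt.comp p ((hG.differentiable one_ne_zero (x, p)).hasFDerivAt)
    (hasFDerivAt_prodMk_right (𝕜 := ℝ) x p)).fderiv
  rw [show (fun p' => G (x, p')) = G ∘ (fun p' : E n => (x, p')) from rfl, h]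
  rfl

end helpers

theorem commutator_of_hamilton_jacobi_fields
    (n : ℕ) (H F : E n × E n → ℝ) (f : E n → ℝ)
    (hH : ContDiff ℝ 1 H) (hF : ContDiff ℝ 1 F) (hf : ContDiff ℝ 2 f) :
    ∀ x : E n,
      ⟪gradient (fun p => F (x, p)) (gradient f x),
          gradient (fun x' => H (x', gradient f x')) x⟫
        - ⟪gradient (fun p => H (x, p)) (gradient f x),
            gradient (fun x' => F (x', gradient f x')) x⟫
      = -(⟪gradient (fun p => H (x, p)) (gradient f x),
              gradient (fun x' => F (x', gradient f x)) x⟫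
          - ⟪gradient (fun x' => H (x', gradient f x)) x,
              gradient (fun p => F (x, p)) (gradient f x)⟫) := by
  intro x
  -- the derivative map of f
  have hf' : ContDiff ℝ 1 (fderiv ℝ f) := hf.fderiv_right (by norm_num)
  set f'' : E n →L[ℝ] E n →L[ℝ] ℝ := fderiv ℝ (fderiv ℝ f) x with hf''def
  have hsymm : ∀ v w, f'' v w = f'' w v := hf.contDiffAt.isSymmSndFDerivAt (by simp [minSmoothness_of_isRCLikeNormedField])
  -- the gradient map g = ∇f and its derivative
  set g : E n → E n := gradient f with hg
  set L : (E n →L[ℝ] ℝ) →L[ℝ] E n :=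
    (toDual ℝ (E n)).symm.toContinuousLinearEquiv.toContinuousLinearMap with hL
  have hgL : g = fun y => L (fderiv ℝ f y) := rfl
  have hDg : HasFDerivAt g (L.comp f'') x := by
    rw [hgL]
    exact L.hasFDerivAt.comp x (hf'.differentiable one_ne_zero x).hasFDerivAt
  set Dg : E n →L[ℝ] E n := L.comp f'' with hDgdef
  have hDg_inner : ∀ u v : E n, ⟪Dg u, v⟫ = f'' u v := by
    intro u v
    exact toDual_symm_apply
  -- chain rule for X_G[f]
  have chain : ∀ (G : E n × E n → ℝ), ContDiff ℝ 1 G → ∀ v : E n,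
      fderiv ℝ (fun x' => G (x', g x')) x v
        = fderiv ℝ G (x, g x) (v, 0) + fderiv ℝ G (x, g x) (0, Dg v) := by
    intro G hG v
    have h1 : HasFDerivAt (fun x' : E n => (x', g x'))
        ((ContinuousLinearMap.id ℝ (E n)).prod Dg) x :=
      HasFDerivAt.prodMk (hasFDerivAt_id x) hDg
    have h2 : HasFDerivAt (fun x' => G (x', g x'))
        ((fderiv ℝ G (x, g x)).comp ((ContinuousLinearMap.id ℝ (E n)).prod Dg)) x :=
      (hG.differentiable one_ne_zero (x, g x)).hasFDerivAt.comp x h1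
    rw [h2.fderiv]
    have : ((v : E n), Dg v) = ((v, 0) : E n × E n) + (0, Dg v) := by simp
    simp only [ContinuousLinearMap.comp_apply, ContinuousLinearMap.prod_apply,
      ContinuousLinearMap.coe_id', id_eq, this, map_add]
  -- abbreviations
  set A : E n := gradient (fun p => H (x, p)) (g x) with hA
  set B : E n := gradient (fun p => F (x, p)) (g x) with hB
  -- inner products with second-slot gradients
  have hA' : ∀ w : E n, ⟪A, w⟫ = fderiv ℝ H (x, g x) (0, w) := fun w => by
    rw [hA, inner_gradient_eq, fderiv_partial_snd H hH]
  have hB' : ∀ w : E n, ⟪B, w⟫ = fderiv ℝ F (x, g x) (0, w) := fun w => by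
    rw [hB, inner_gradient_eq, fderiv_partial_snd F hF]
  -- expand the four gradient inner products
  have e1 : ⟪B, gradient (fun x' => H (x', gradient f x')) x⟫
      = fderiv ℝ H (x, g x) (B, 0) + fderiv ℝ H (x, g x) (0, Dg B) := by
    rw [real_inner_comm, inner_gradient_eq, chain H hH]
  have e2 : ⟪A, gradient (fun x' => F (x', gradient f x')) x⟫
      = fderiv ℝ F (x, g x) (A, 0) + fderiv ℝ F (x, g x) (0, Dg A) := by
    rw [real_inner_comm, inner_gradient_eq, chain F hF]
  have e3 : ⟪A, gradient (fun x' => F (x', gradient f x)) x⟫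
      = fderiv ℝ F (x, g x) (A, 0) := by
    rw [real_inner_comm, inner_gradient_eq, fderiv_partial_fst F hF]
  have e4 : ⟪gradient (fun x' => H (x', gradient f x)) x, B⟫
      = fderiv ℝ H (x, g x) (B, 0) := by
    rw [inner_gradient_eq, fderiv_partial_fst H hH]
  -- cancellation of second-order terms by symmetry of the Hessian
  have cancel : fderiv ℝ H (x, g x) (0, Dg B) = fderiv ℝ F (x, g x) (0, Dg A) := by
    rw [← hA', ← hB']
    have c1 : ⟪A, Dg B⟫ = f'' B A := by rw [real_inner_comm]; exact hDg_inner B A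
    have c2 : ⟪B, Dg A⟫ = f'' A B := by rw [real_inner_comm]; exact hDg_inner A B
    rw [c1, c2, hsymm]
  rw [e1, e2, e3, e4, cancel]
  ring
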